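/- Let X be symmetric positive definite, η symmetric, and set E = X^{1/2} exp((1/2) X^{−1/2} η X^{−1/2}) X^{−1/2} and Y = X^{1/2} exp(X^{−1/2} η X^{−1/2}) X^{1/2}. Then for all symmetric ξ, ζ, one has tr(Y⁻¹ (EξEᵀ) Y⁻¹ (EζEᵀ)) = tr(X⁻¹ ξ X⁻¹ ζ); i.e., parallel transport ξ ↦ EξEᵀ is an isometry from the tangent space at X to the tangent space at Y under the affine-invariant metric. -/

import Mathlib

open Matrix

section

open scoped ComplexOrder

/-- The square root of a positive semidefinite matrix, as `Matrix.PosSemidef.sqrt` was defined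
in Mathlib (December 2024); it has since been removed in favour of `CFC.sqrt`. -/
noncomputable def Matrix.PosSemidef.sqrt {m : Type*} [Fintype m] [DecidableEq m] {𝕜 : Type*}
    [RCLike 𝕜] {A : Matrix m m 𝕜} (hA : A.PosSemidef) : Matrix m m 𝕜 :=
  hA.1.eigenvectorUnitary.1 * diagonal ((↑) ∘ (√·) ∘ hA.1.eigenvalues) *
    (star hA.1.eigenvectorUnitary : Matrix m m 𝕜)

end

theorem psd_sqrt_mul_self_aux {n : ℕ} {X : Matrix (Fin n) (Fin n) ℝ} (hA : X.PosSemidef) :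
    hA.sqrt * hA.sqrt = X := by
  conv_rhs => rw [hA.1.spectral_theorem]
  rw [Unitary.conjStarAlgAut_apply]
  simp only [Matrix.PosSemidef.sqrt, Matrix.mul_assoc]
  rw [← Matrix.mul_assoc (star hA.1.eigenvectorUnitary : Matrix (Fin n) (Fin n) ℝ)
    (hA.1.eigenvectorUnitary : Matrix (Fin n) (Fin n) ℝ), Unitary.coe_star_mul_self,
    Matrix.one_mul]
  congr 1
  rw [← Matrix.mul_assoc, diagonal_mul_diagonal]
  congr 2
  funext i
  simp [Real.mul_self_sqrt (hA.eigenvalues_nonneg i)]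

theorem psd_sqrt_transpose_aux {n : ℕ} {X : Matrix (Fin n) (Fin n) ℝ} (hA : X.PosSemidef) :
    (hA.sqrt)ᵀ = hA.sqrt := by
  rw [← conjTranspose_eq_transpose_of_trivial]
  simp only [Matrix.PosSemidef.sqrt, conjTranspose_mul, Matrix.star_eq_conjTranspose,
    conjTranspose_conjTranspose, diagonal_conjTranspose, Matrix.mul_assoc]
  congr 3

theorem parallel_transport_isometry {n : ℕ} (X η : Matrix (Fin n) (Fin n) ℝ)
    (hX : X.PosDef) (hη : ηᵀ = η) :
    ∀ ξ ζ : Matrix (Fin n) (Fin n) ℝ, ξᵀ = ξ → ζᵀ = ζ →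
      letI S := hX.posSemidef.sqrt
      letI E := S * NormedSpace.exp (((1:ℝ)/2) • (S⁻¹ * η * S⁻¹)) * S⁻¹
      letI Y := S * NormedSpace.exp (S⁻¹ * η * S⁻¹) * S
      (Y⁻¹ * (E * ξ * Eᵀ) * Y⁻¹ * (E * ζ * Eᵀ)).trace
        = (X⁻¹ * ξ * X⁻¹ * ζ).trace := by
  intro ξ ζ hξ hζ
  set S := hX.posSemidef.sqrt with hSdef
  have hSS : S * S = X := psd_sqrt_mul_self_aux hX.posSemidef
  have hSsym : Sᵀ = S := by
    exact psd_sqrt_transpose_aux hX.posSemidef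
  have hSd : IsUnit S.det := by
    have hXd : X.det ≠ 0 := hX.det_pos.ne'
    rw [← hSS, det_mul] at hXd
    exact isUnit_iff_ne_zero.mpr fun h => hXd (by rw [h, mul_zero])
  set A := S⁻¹ * η * S⁻¹ with hAdef
  have hAsym : Aᵀ = A := by
    rw [hAdef, transpose_mul, transpose_mul, transpose_nonsing_inv, hSsym, hη,
      Matrix.mul_assoc]
  set P := NormedSpace.exp (((1:ℝ)/2) • A) with hPdef
  have hPP : P * P = NormedSpace.exp A := by
    rw [hPdef, ← Matrix.exp_add_of_commute _ _ (Commute.refl _), ← add_smul]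
    norm_num
  have hPsym : Pᵀ = P := by
    rw [hPdef, ← Matrix.exp_transpose, transpose_smul, hAsym]
  have hPd : IsUnit P.det := by
    rw [← isUnit_iff_isUnit_det]
    exact Matrix.isUnit_exp _
  have c1 : ∀ B : Matrix (Fin n) (Fin n) ℝ, S⁻¹ * (S * B) = B :=
    fun B => Matrix.nonsing_inv_mul_cancel_left _ _ hSd
  have c2 : ∀ B : Matrix (Fin n) (Fin n) ℝ, S * (S⁻¹ * B) = B :=
    fun B => Matrix.mul_nonsing_inv_cancel_left _ _ hSd
  have c3 : ∀ B : Matrix (Fin n) (Fin n) ℝ, P⁻¹ * (P * B) = B :=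
    fun B => Matrix.nonsing_inv_mul_cancel_left _ _ hPd
  have c4 : ∀ B : Matrix (Fin n) (Fin n) ℝ, P * (P⁻¹ * B) = B :=
    fun B => Matrix.mul_nonsing_inv_cancel_left _ _ hPd
  -- Y⁻¹
  have hYinv : (S * NormedSpace.exp A * S)⁻¹ = S⁻¹ * P⁻¹ * P⁻¹ * S⁻¹ := by
    apply Matrix.inv_eq_left_inv
    rw [← hPP]
    simp only [Matrix.mul_assoc, c1, c3]
    exact Matrix.nonsing_inv_mul _ hSd
  -- Eᵀ
  have hEt : (S * P * S⁻¹)ᵀ = S⁻¹ * P * S := by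
    rw [transpose_mul, transpose_mul, transpose_nonsing_inv, hSsym, hPsym, Matrix.mul_assoc]
  -- X⁻¹
  have hXinv : X⁻¹ = S⁻¹ * S⁻¹ := by rw [← hSS, Matrix.mul_inv_rev]
  show ((S * NormedSpace.exp A * S)⁻¹ * (S * P * S⁻¹ * ξ * (S * P * S⁻¹)ᵀ) *
      (S * NormedSpace.exp A * S)⁻¹ * (S * P * S⁻¹ * ζ * (S * P * S⁻¹)ᵀ)).trace
      = (X⁻¹ * ξ * X⁻¹ * ζ).trace
  have key : S⁻¹ * P⁻¹ * P⁻¹ * S⁻¹ * (S * P * S⁻¹ * ξ * (S⁻¹ * P * S)) *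
      (S⁻¹ * P⁻¹ * P⁻¹ * S⁻¹) * (S * P * S⁻¹ * ζ * (S⁻¹ * P * S))
      = (S⁻¹ * P⁻¹) * (S⁻¹ * ξ * (S⁻¹ * S⁻¹) * ζ * S⁻¹) * (P * S) := by
    simp only [Matrix.mul_assoc, c1, c2, c3, c4]
  have hcan : P * S * (S⁻¹ * P⁻¹) = 1 := by
    rw [Matrix.mul_assoc P S, c2, Matrix.mul_nonsing_inv _ hPd]
  rw [hYinv, hEt, hXinv, key, Matrix.trace_mul_cycle, ← Matrix.mul_assoc, hcan,
    Matrix.one_mul, Matrix.trace_mul_comm]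
  simp only [Matrix.mul_assoc]
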